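/- Let G = (V,E,w) be a connected weighted graph, T a maximum spanning tree of G, and C ⊆ V a subset spanning a single connected component in T (the T-edges inside C form a connected subtree covering C). Then the subtree of T induced by C is a maximum spanning tree of the induced subgraph G[C]. -/

import Mathlib

open scoped Classical
noncomputable section

namespace Bal

variable {V : Type*}

/-- Total weight of the edges of a graph. -/
def totalWeight {α : Type*} [Fintype α] (H : SimpleGraph α) (w : Sym2 α → ℝ) : ℝ :=
  ∑ e : Sym2 α, if e ∈ H.edgeSet then w e else 0

/-- `T` is a maximum spanning tree of `G` w.r.t. the weight `w`. -/
def IsMaxSpanTree {α : Type*} [Fintype α] (G T : SimpleGraph α) (w : Sym2 α → ℝ) : Prop :=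
  T ≤ G ∧ T.IsTree ∧
    ∀ T' : SimpleGraph α, T' ≤ G → T'.IsTree → totalWeight T' w ≤ totalWeight T w

/-- Weight function on the induced subgraph on `C`. -/
def subWeight (w : Sym2 V → ℝ) (C : Set V) : Sym2 C → ℝ :=
  fun e => w (e.map Subtype.val)

/-- Edges of `G` with exactly one endpoint in `C`. -/
def outEdges (G : SimpleGraph V) (C : Set V) : Set (Sym2 V) :=
  {e | e ∈ G.edgeSet ∧ ∃ a b, e = s(a, b) ∧ a ∈ C ∧ b ∉ C}

/-- Edges of `G` with both endpoints in `C`. -/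
def inEdges (G : SimpleGraph V) (C : Set V) : Set (Sym2 V) :=
  {e | e ∈ G.edgeSet ∧ ∀ x ∈ e, x ∈ C}

/-- `max(Out(C))`, with the convention `sSup ∅ = 0`. -/
def maxOut (G : SimpleGraph V) (w : Sym2 V → ℝ) (C : Set V) : ℝ :=
  sSup (w '' outEdges G C)

/-- `min(E(C))`, with the convention that it is `1` for singletons. -/
def minIn (G : SimpleGraph V) (w : Sym2 V → ℝ) (C : Set V) : ℝ :=
  if C.Subsingleton then 1 else sInf (w '' inEdges G C)

/-- `min(MST(C))` : minimum weight of an edge of a maximum spanning tree of `G[C]`,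
with the convention that it is `1` for singletons. -/
def minMST [Fintype V] (G : SimpleGraph V) (w : Sym2 V → ℝ) (C : Set V) : ℝ :=
  if C.Subsingleton then 1
  else if h : ∃ T : SimpleGraph C, IsMaxSpanTree (G.induce C) T (subWeight w C) then
    sInf (subWeight w C '' h.choose.edgeSet)
  else 1

/-- Quality measure of a cluster in a graph: `max(Out(C)) / min(MST(C))`. -/
def phi [Fintype V] (G : SimpleGraph V) (w : Sym2 V → ℝ) (C : Set V) : ℝ :=
  maxOut G w C / minMST G w C

/-- Quality measure of a cluster in a tree: `max(Out(C)) / min(E(C))`. -/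
def phiT (G : SimpleGraph V) (w : Sym2 V → ℝ) (C : Set V) : ℝ :=
  maxOut G w C / minIn G w C

/-- `𝒞` is a partition of `U ⊆ V` into `G`-connected parts. -/
def IsPartitionOn (G : SimpleGraph V) (U : Set V) (𝒞 : Set (Set V)) : Prop :=
  (∀ C ∈ 𝒞, C.Nonempty ∧ C ⊆ U ∧ (G.induce C).Connected) ∧
  (∀ C ∈ 𝒞, ∀ C' ∈ 𝒞, C ≠ C' → Disjoint C C') ∧ ⋃₀ 𝒞 = U

/-- A `k`-clustering of a graph `G` on vertex set `V`. -/
def IsClustering (G : SimpleGraph V) (𝒞 : Set (Set V)) (k : ℕ) : Prop :=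
  IsPartitionOn G Set.univ 𝒞 ∧ 𝒞.ncard = k

/-- Evaluation of a clustering of a graph (min-max quality measure, MST-based). -/
def eval [Fintype V] (G : SimpleGraph V) (w : Sym2 V → ℝ) (𝒞 : Set (Set V)) : ℝ :=
  sSup (phi G w '' 𝒞)

/-- Evaluation of a clustering of a tree. -/
def evalT (G : SimpleGraph V) (w : Sym2 V → ℝ) (𝒞 : Set (Set V)) : ℝ :=
  sSup (phiT G w '' 𝒞)

/-- `𝒞` is an optimal `k`-clustering of `G`. -/
def IsOptimal [Fintype V] (G : SimpleGraph V) (w : Sym2 V → ℝ) (k : ℕ) (𝒞 : Set (Set V)) : Prop :=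
  IsClustering G 𝒞 k ∧ ∀ 𝒟, IsClustering G 𝒟 k → eval G w 𝒞 ≤ eval G w 𝒟

/-- All edge weights lie in the open interval `(0,1)`. -/
def weightsOK (G : SimpleGraph V) (w : Sym2 V → ℝ) : Prop :=
  ∀ e ∈ G.edgeSet, 0 < w e ∧ w e < 1

/-- The set of connected components (as vertex sets) of a graph. -/
def components (G : SimpleGraph V) : Set (Set V) :=
  {C | ∃ x : V, C = {y | G.Reachable x y}}


/-- lift reachability along edgewise reachability -/
lemma reachable_of_forall_adj {H K : SimpleGraph V}
    (h : ∀ a b, H.Adj a b → K.Reachable a b) {a b : V} (hr : H.Reachable a b) :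
    K.Reachable a b := by
  obtain ⟨p⟩ := hr
  induction p with
  | nil => exact SimpleGraph.Reachable.refl _
  | cons hadj q ih => exact (h _ _ hadj).trans ih

lemma connected_sdiff_of_reachable {H : SimpleGraph V} (hc : H.Connected) {a b : V}
    (hr : (H \ SimpleGraph.fromEdgeSet {s(a,b)}).Reachable a b) :
    (H \ SimpleGraph.fromEdgeSet {s(a,b)}).Connected := by
  haveI : Nonempty V := hc.nonempty
  refine SimpleGraph.Connected.mk fun x y => ?_
  refine reachable_of_forall_adj (fun u v huv => ?_) (hc.preconnected x y)
  by_cases he : s(u, v) = s(a, b)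
  · rw [Sym2.eq_iff] at he
    rcases he with ⟨rfl, rfl⟩ | ⟨rfl, rfl⟩
    · exact hr
    · exact hr.symm
  · exact SimpleGraph.Adj.reachable (by
      rw [SimpleGraph.sdiff_adj]
      refine ⟨huv, ?_⟩
      rw [SimpleGraph.fromEdgeSet_adj]
      rintro ⟨hmem, -⟩
      exact he hmem)

lemma exists_tree_le_aux [Fintype V] :
    ∀ n (H : SimpleGraph V), H.edgeSet.ncard = n → H.Connected → ∃ T ≤ H, T.IsTree := by
  intro n
  induction n using Nat.strong_induction_on with
  | _ n ih =>
    intro H hcard hconn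
    by_cases hac : H.IsAcyclic
    · exact ⟨H, le_refl _, ⟨hconn, hac⟩⟩
    · simp only [SimpleGraph.IsAcyclic, not_forall, not_not] at hac
      obtain ⟨v, c, hc⟩ := hac
      have hne : c.edges ≠ [] := by
        intro h
        have h3 := hc.three_le_length
        rw [← SimpleGraph.Walk.length_edges, h] at h3
        simp at h3
      obtain ⟨e, he⟩ := List.exists_mem_of_ne_nil _ hne
      induction e using Sym2.ind with
      | _ a b =>
      have hadj : H.Adj a b := c.adj_of_mem_edges he
      have hnb : ¬ H.IsBridge s(a, b) := by
        rw [SimpleGraph.isBridge_iff_adj_and_forall_cycle_notMem hadj]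
        intro hall
        exact hall c hc he
      have hr : (H \ SimpleGraph.fromEdgeSet {s(a,b)}).Reachable a b := by
        rw [SimpleGraph.isBridge_iff] at hnb
        push_neg at hnb
        exact hnb
      set H' := H \ SimpleGraph.fromEdgeSet {s(a,b)} with hH'
      have hle : H' ≤ H := sdiff_le
      have hconn' : H'.Connected := connected_sdiff_of_reachable hconn hr
      have hes : H'.edgeSet = H.edgeSet \ {s(a,b)} := by
        rw [hH', SimpleGraph.edgeSet_sdiff, SimpleGraph.edgeSet_fromEdgeSet,
          SimpleGraph.edgeSet_sdiff_sdiff_isDiag]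
      have hlt : H'.edgeSet.ncard < n := by
        rw [← hcard]
        apply Set.ncard_lt_ncard _ H.edgeSet.toFinite
        rw [hes]
        constructor
        · exact Set.diff_subset
        · intro hsub
          have := hsub ((SimpleGraph.mem_edgeSet H).mpr hadj)
          simp at this
      obtain ⟨T, hTle, hT⟩ := ih _ hlt H' rfl hconn'
      exact ⟨T, le_trans hTle hle, hT⟩

/-- glue a graph on C with the outside part of T -/
def glue (C : Set V) (T : SimpleGraph V) (T' : SimpleGraph C) : SimpleGraph V where
  Adj a b := (T.Adj a b ∧ ¬(a ∈ C ∧ b ∈ C)) ∨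
    ∃ (ha : a ∈ C) (hb : b ∈ C), T'.Adj ⟨a, ha⟩ ⟨b, hb⟩
  symm := ⟨by
    rintro a b (⟨h, hn⟩ | ⟨ha, hb, h⟩)
    · exact Or.inl ⟨h.symm, fun ⟨x, y⟩ => hn ⟨y, x⟩⟩
    · exact Or.inr ⟨hb, ha, h.symm⟩⟩
  loopless := ⟨by
    rintro a (⟨h, -⟩ | ⟨ha, hb, h⟩)
    · exact T.irrefl h
    · exact T'.irrefl h⟩

lemma inside_iff (C : Set V) (a b : V) :
    (∀ x ∈ s(a, b), x ∈ C) ↔ a ∈ C ∧ b ∈ C := by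
  constructor
  · intro h
    exact ⟨h a (by simp), h b (by simp)⟩
  · rintro ⟨ha, hb⟩ x hx
    rcases Sym2.mem_iff.mp hx with rfl | rfl <;> assumption

lemma totalWeight_induce [Fintype V] (C : Set V) (H : SimpleGraph V) (w : Sym2 V → ℝ) :
    totalWeight (H.induce C) (subWeight w C) =
      ∑ e : Sym2 V, if e ∈ H.edgeSet ∧ (∀ x ∈ e, x ∈ C) then w e else 0 := by
  classical
  set g : Sym2 V → ℝ := fun e => if e ∈ H.edgeSet ∧ (∀ x ∈ e, x ∈ C) then w e else 0 with hg
  have hinj : Function.Injective (Sym2.map (Subtype.val : C → V)) :=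
    Sym2.map.injective Subtype.val_injective
  have h1 : ∀ e' : Sym2 C,
      (if e' ∈ (H.induce C).edgeSet then subWeight w C e' else 0)
        = g (Sym2.map Subtype.val e') := by
    intro e'
    induction e' using Sym2.ind with
    | _ u v =>
      simp only [hg, SimpleGraph.mem_edgeSet, subWeight, Sym2.map_pair_eq]
      have hin : (∀ x ∈ s((u : V), (v : V)), x ∈ C) := (inside_iff C _ _).mpr ⟨u.2, v.2⟩
      by_cases hadj : H.Adj ↑u ↑v
      · rw [if_pos (by simpa using hadj), if_pos ⟨hadj, hin⟩]
      · rw [if_neg (by simpa using hadj), if_neg (fun hc => hadj hc.1)]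
  calc totalWeight (H.induce C) (subWeight w C)
      = ∑ e' : Sym2 C, g (Sym2.map Subtype.val e') := by
        unfold totalWeight
        exact Finset.sum_congr rfl fun e' _ => h1 e'
    _ = ∑ e ∈ Finset.univ.image (Sym2.map (Subtype.val : C → V)), g e := by
        rw [Finset.sum_image (fun x _ y _ h => hinj h)]
    _ = ∑ e : Sym2 V, g e := by
        apply Finset.sum_subset (Finset.subset_univ _)
        intro e _ hnotin
        rw [hg]
        apply if_neg
        rintro ⟨-, hin⟩
        apply hnotin
        induction e using Sym2.ind with
        | _ a b =>
          obtain ⟨ha, hb⟩ := (inside_iff C a b).mp hin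
          exact Finset.mem_image.mpr ⟨s(⟨a, ha⟩, ⟨b, hb⟩), Finset.mem_univ _, by simp⟩

lemma totalWeight_split [Fintype V] (C : Set V) (H : SimpleGraph V) (w : Sym2 V → ℝ) :
    totalWeight H w =
      (∑ e : Sym2 V, if e ∈ H.edgeSet ∧ (∀ x ∈ e, x ∈ C) then w e else 0) +
      (∑ e : Sym2 V, if e ∈ H.edgeSet ∧ ¬(∀ x ∈ e, x ∈ C) then w e else 0) := by
  unfold totalWeight
  rw [← Finset.sum_add_distrib]
  apply Finset.sum_congr rfl
  intro e _
  rcases Classical.em (e ∈ H.edgeSet) with h1 | h1 <;>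
    rcases Classical.em (∀ x ∈ e, x ∈ C) with h2 | h2
  · rw [if_pos h1, if_pos ⟨h1, h2⟩, if_neg (fun h => h.2 h2)]; ring
  · rw [if_pos h1, if_neg (fun h => h2 h.2), if_pos ⟨h1, h2⟩]; ring
  · rw [if_neg h1, if_neg (fun h => h1 h.1), if_neg (fun h => h1 h.1)]; ring
  · rw [if_neg h1, if_neg (fun h => h1 h.1), if_neg (fun h => h1 h.1)]; ring

lemma totalWeight_count [Fintype V] (H : SimpleGraph V) :
    totalWeight H (fun _ => (1 : ℝ)) = (H.edgeFinset.card : ℝ) := by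
  classical
  unfold totalWeight
  rw [Finset.sum_boole]
  have : Finset.univ.filter (fun e => e ∈ H.edgeSet) = H.edgeFinset := by
    ext e
    simp [SimpleGraph.mem_edgeFinset]
  rw [this]

/-- if `C` spans a single connected component of a maximum spanning tree `T`,
then the induced subtree of `T` is a maximum spanning tree of `G[C]`. -/
theorem statement16 {V : Type*} [Fintype V] (G : SimpleGraph V) (w : Sym2 V → ℝ)
    (hconn : G.Connected) (T : SimpleGraph V) (hT : IsMaxSpanTree G T w)
    (C : Set V) (hCT : (T.induce C).Connected) :
    IsMaxSpanTree (G.induce C) (T.induce C) (subWeight w C) := by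
  classical
  obtain ⟨hTG, hTtree, hTmax⟩ := hT
  haveI : Nonempty C := hCT.nonempty
  have hTCle : T.induce C ≤ G.induce C := fun a b hab => by
    simp only [SimpleGraph.comap_adj] at *
    exact hTG hab
  have hTCacyc : (T.induce C).IsAcyclic := by
    intro v c hc
    let f : T.induce C →g T := ⟨Subtype.val, fun {a b} h => by simpa using h⟩
    exact hTtree.IsAcyclic (c.map f) (hc.map (show Function.Injective ⇑f from Subtype.val_injective))
  have hTCtree : (T.induce C).IsTree := ⟨hCT, hTCacyc⟩
  refine ⟨hTCle, hTCtree, ?_⟩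
  intro T' hT'le hT'tree
  set TT := glue C T T' with hTT
  have hT''G : TT ≤ G := by
    rintro a b (⟨h, -⟩ | ⟨ha, hb, h⟩)
    · exact hTG h
    · have := hT'le h
      simpa using this
  have hind : TT.induce C = T' := by
    ext u v
    simp only [SimpleGraph.comap_adj]
    constructor
    · rintro (⟨h, hn⟩ | ⟨ha, hb, h⟩)
      · exact absurd ⟨u.2, v.2⟩ hn
      · exact h
    · intro h
      exact Or.inr ⟨u.2, v.2, h⟩
  have hout : ∀ e : Sym2 V,
      (e ∈ TT.edgeSet ∧ ¬(∀ x ∈ e, x ∈ C)) ↔ (e ∈ T.edgeSet ∧ ¬(∀ x ∈ e, x ∈ C)) := by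
    intro e
    induction e using Sym2.ind with
    | _ a b =>
      simp only [SimpleGraph.mem_edgeSet, inside_iff]
      constructor
      · rintro ⟨(⟨h, -⟩ | ⟨ha, hb, -⟩), hn⟩
        · exact ⟨h, hn⟩
        · exact absurd ⟨ha, hb⟩ hn
      · rintro ⟨h, hn⟩
        exact ⟨Or.inl ⟨h, hn⟩, hn⟩
  have hkey : ∀ u : Sym2 V → ℝ, totalWeight TT u =
      totalWeight T u - totalWeight (T.induce C) (subWeight u C)
        + totalWeight T' (subWeight u C) := by
    intro u
    have h1 := totalWeight_split C TT u
    have h2 := totalWeight_split C T u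
    have h3 := totalWeight_induce C T u
    have h4 : totalWeight T' (subWeight u C) =
        ∑ e : Sym2 V, if e ∈ TT.edgeSet ∧ (∀ x ∈ e, x ∈ C) then u e else 0 := by
      rw [← hind, totalWeight_induce]
    have h5 : (∑ e : Sym2 V, if e ∈ TT.edgeSet ∧ ¬(∀ x ∈ e, x ∈ C) then u e else 0)
        = ∑ e : Sym2 V, if e ∈ T.edgeSet ∧ ¬(∀ x ∈ e, x ∈ C) then u e else 0 := by
      apply Finset.sum_congr rfl
      intro e _
      exact if_congr (hout e) rfl rfl
    rw [h1, h2, h3, h4, h5]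
    ring
  -- connectivity of TT
  let f : T' →g TT := ⟨Subtype.val, fun {u v} h => Or.inr ⟨u.2, v.2, h⟩⟩
  have hadjreach : ∀ a b, T.Adj a b → TT.Reachable a b := by
    intro a b hab
    by_cases hC : a ∈ C ∧ b ∈ C
    · exact ((hT'tree.isConnected.preconnected ⟨a, hC.1⟩ ⟨b, hC.2⟩).map f :
        TT.Reachable a b)
    · exact SimpleGraph.Adj.reachable (Or.inl ⟨hab, hC⟩)
  have hglueconn : TT.Connected := by
    haveI : Nonempty V := hTtree.isConnected.nonempty
    exact SimpleGraph.Connected.mk fun x y =>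
      reachable_of_forall_adj hadjreach (hTtree.isConnected.preconnected x y)
  -- edge count of TT
  have c1 : T.edgeFinset.card + 1 = Fintype.card V := hTtree.card_edgeFinset
  have c2 : (T.induce C).edgeFinset.card + 1 = Fintype.card C := hTCtree.card_edgeFinset
  have c3 : T'.edgeFinset.card + 1 = Fintype.card C := hT'tree.card_edgeFinset
  have hgluecard : TT.edgeFinset.card + 1 = Fintype.card V := by
    have h1 := hkey (fun _ => (1 : ℝ))
    have hsw : subWeight (fun _ => (1 : ℝ)) C = fun _ => (1 : ℝ) := rfl
    rw [hsw, totalWeight_count, totalWeight_count, totalWeight_count, totalWeight_count] at h1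
    have e1 : (T.edgeFinset.card : ℝ) + 1 = (Fintype.card V : ℝ) := by exact_mod_cast c1
    have e2 : ((T.induce C).edgeFinset.card : ℝ) + 1 = (Fintype.card C : ℝ) := by
      exact_mod_cast c2
    have e3 : (T'.edgeFinset.card : ℝ) + 1 = (Fintype.card C : ℝ) := by exact_mod_cast c3
    have h1' : (TT.edgeFinset.card : ℝ) = T.edgeFinset.card - (T.induce C).edgeFinset.card
        + T'.edgeFinset.card := by convert h1
    have : (TT.edgeFinset.card : ℝ) + 1 = (Fintype.card V : ℝ) := by linarith
    exact_mod_cast this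
  obtain ⟨S, hSle, hStree⟩ := exists_tree_le_aux TT.edgeSet.ncard TT rfl hglueconn
  have hScard : S.edgeFinset.card + 1 = Fintype.card V := hStree.card_edgeFinset
  have hSfin : S.edgeFinset = TT.edgeFinset :=
    Finset.eq_of_subset_of_card_le (SimpleGraph.edgeFinset_mono hSle) (by omega)
  have hSeq : S = TT := by
    rw [← SimpleGraph.edgeSet_inj]
    have := hSfin
    rwa [SimpleGraph.edgeFinset, SimpleGraph.edgeFinset, Set.toFinset_inj] at this
  have hgluetree : TT.IsTree := hSeq ▸ hStree
  have hle := hTmax TT hT''G hgluetree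
  have hkw := hkey w
  linarith

end Bal
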